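/- Let E → M be a complex vector bundle over a compact Hausdorff space M. Then there exists a complex vector bundle τ → M and a positive integer k such that E ⊕ τ is isomorphic to the trivial complex bundle M × ℂ^k. -/

import Mathlib

open Bundle
open Topology Filter Set

/-- any complex vector bundle `E` over a compact Hausdorff base admits a
complement `τ` with `E ⊕ τ` trivial.  Equivalently (as formalized here): there are `k ∈ ℕ`
and continuous fiberwise-linear bundle maps `φ : E → M × ℂ^k` and `ψ : M × ℂ^k → E` with
`ψ ∘ φ = id`, exhibiting `E` as a direct summand of the trivial bundle `M × ℂ^k`; the
complement `τ = ker(φ ∘ ψ... )`, i.e. the image of `id − φ ∘ ψ`, then satisfies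
`E ⊕ τ ≅ M × ℂ^k`. -/
theorem stmt_5
    {B : Type*} [TopologicalSpace B] [CompactSpace B] [T2Space B]
    (F : Type*) [NormedAddCommGroup F] [NormedSpace ℂ F] [FiniteDimensional ℂ F]
    (E : B → Type*) [TopologicalSpace (TotalSpace F E)]
    [∀ x, AddCommGroup (E x)] [∀ x, Module ℂ (E x)] [∀ x, TopologicalSpace (E x)]
    [FiberBundle F E] [VectorBundle ℂ F E] :
    ∃ (k : ℕ) (φ : ∀ x, E x →L[ℂ] (Fin k → ℂ)) (ψ : ∀ x, (Fin k → ℂ) →L[ℂ] E x),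
      Continuous (fun p : TotalSpace F E => (p.1, φ p.1 p.2)) ∧
      Continuous (fun q : B × (Fin k → ℂ) =>
        (TotalSpace.mk q.1 (ψ q.1 q.2) : TotalSpace F E)) ∧
      ∀ (x : B) (v : E x), ψ x (φ x v) = v := by
  classical
  haveI fibTop : ∀ x : B, IsTopologicalAddGroup (E x) := fun x => by
    let φx := (trivializationAt F E x).continuousLinearEquivAt ℂ x
      (FiberBundle.mem_baseSet_trivializationAt F E x)
    refine { continuous_add := ?_, continuous_neg := ?_ }
    · have h : (fun p : E x × E x => p.1 + p.2) = fun p => φx.symm (φx p.1 + φx p.2) := by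
        funext p; rw [← map_add, ContinuousLinearEquiv.symm_apply_apply]
      rw [h]
      exact φx.symm.continuous.comp
        ((φx.continuous.comp continuous_fst).add (φx.continuous.comp continuous_snd))
    · have h : (fun v : E x => -v) = fun v => φx.symm (-(φx v)) := by
        funext v; rw [← map_neg, ContinuousLinearEquiv.symm_apply_apply]
      rw [h]
      exact φx.symm.continuous.comp φx.continuous.neg
  haveI fibSMul : ∀ x : B, ContinuousConstSMul ℂ (E x) := fun x => by
    let φx := (trivializationAt F E x).continuousLinearEquivAt ℂ x
      (FiberBundle.mem_baseSet_trivializationAt F E x)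
    refine ⟨fun a => ?_⟩
    have h : (fun v : E x => a • v) = fun v => φx.symm (a • φx v) := by
      funext v; rw [← map_smul, ContinuousLinearEquiv.symm_apply_apply]
    rw [h]
    exact φx.symm.continuous.comp (φx.continuous.const_smul a)
  obtain ⟨t, ht⟩ := IsCompact.elim_finite_subcover isCompact_univ
    (fun x : B => (trivializationAt F E x).baseSet)
    (fun x => (trivializationAt F E x).open_baseSet)
    (fun x _ => Set.mem_iUnion.2 ⟨x, FiberBundle.mem_baseSet_trivializationAt F E x⟩)
  have hcov : (Set.univ : Set B) ⊆ ⋃ i : {x // x ∈ t}, (trivializationAt F E i.1).baseSet := by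
    intro x hx
    obtain ⟨s, ⟨y, rfl⟩, hs2⟩ := ht hx
    simp only [Set.mem_iUnion] at hs2 ⊢
    obtain ⟨hyt, hxy⟩ := hs2
    exact ⟨⟨y, hyt⟩, hxy⟩
  obtain ⟨ρ, hρ⟩ := PartitionOfUnity.exists_isSubordinate (s := (Set.univ : Set B))
    isClosed_univ (fun i : {x // x ∈ t} => (trivializationAt F E i.1).baseSet)
    (fun i => (trivializationAt F E i.1).open_baseSet) hcov
  set c : {x // x ∈ t} → B → ℂ := fun i x => ((Real.sqrt (ρ i x) : ℝ) : ℂ) with hc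
  have hc_cont : ∀ i, Continuous (c i) := fun i =>
    Complex.continuous_ofReal.comp ((ρ i).continuous.sqrt)
  have hc_zero : ∀ i x, x ∉ tsupport ⇑(ρ i) → c i x = 0 := by
    intro i x hx
    simp [hc, image_eq_zero_of_notMem_tsupport hx]
  have hc_zero' : ∀ i x, x ∉ (trivializationAt F E i.1).baseSet → c i x = 0 := fun i x hx =>
    hc_zero i x (fun h => hx (hρ i h))
  have hc_sq : ∀ x, ∑ i, (c i x) ^ 2 = 1 := by
    intro x
    have h1 : ∑ i, ρ i x = 1 := by
      have := ρ.sum_eq_one (Set.mem_univ x)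
      rwa [finsum_eq_sum_of_fintype] at this
    have h2 : ∑ i, (c i x) ^ 2 = ((∑ i, ρ i x : ℝ) : ℂ) := by
      simp only [hc]
      push_cast
      refine Finset.sum_congr rfl fun i _ => ?_
      norm_cast
      exact Real.sq_sqrt (ρ.nonneg i x)
    rw [h2, h1, Complex.ofReal_one]
  -- the raw fiberwise maps, valued in `{x // x ∈ t} → F`
  set φ₀ : ∀ x, E x →L[ℂ] ({x // x ∈ t} → F) := fun x =>
    ContinuousLinearMap.pi fun i => c i x • (trivializationAt F E i.1).continuousLinearMapAt ℂ x
    with hφ₀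
  set ψ₀ : ∀ x, ({x // x ∈ t} → F) →L[ℂ] E x := fun x =>
    ∑ i, c i x • ((trivializationAt F E i.1).symmL ℂ x).comp
      (ContinuousLinearMap.proj i) with hψ₀
  have hinv : ∀ (x : B) (v : E x), ψ₀ x (φ₀ x v) = v := by
    intro x v
    rw [hψ₀, hφ₀]
    simp only [ContinuousLinearMap.sum_apply, ContinuousLinearMap.smul_apply,
      ContinuousLinearMap.comp_apply, ContinuousLinearMap.proj_apply,
      ContinuousLinearMap.pi_apply, map_smul]
    have hterm : ∀ i : {x // x ∈ t},
        c i x • c i x • (trivializationAt F E i.1).symmL ℂ x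
          ((trivializationAt F E i.1).continuousLinearMapAt ℂ x v) = (c i x) ^ 2 • v := by
      intro i
      by_cases hx : x ∈ (trivializationAt F E i.1).baseSet
      · rw [Trivialization.symmL_continuousLinearMapAt _ hx, smul_smul, sq]
      · rw [hc_zero' i x hx]; simp
    rw [Finset.sum_congr rfl fun i _ => hterm i, ← Finset.sum_smul, hc_sq, one_smul]
  -- the identification of `{x // x ∈ t} → F` with `ℂ^k`
  set k := Module.finrank ℂ ({x // x ∈ t} → F) with hk
  set A : ({x // x ∈ t} → F) ≃L[ℂ] (Fin k → ℂ) :=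
    (Module.finBasis ℂ ({x // x ∈ t} → F)).equivFun.toContinuousLinearEquiv with hA
  refine ⟨k, fun x => (A : ({x // x ∈ t} → F) →L[ℂ] (Fin k → ℂ)).comp (φ₀ x),
    fun x => (ψ₀ x).comp (A.symm : (Fin k → ℂ) →L[ℂ] ({x // x ∈ t} → F)), ?_, ?_, ?_⟩
  · -- continuity of φ
    have key : ∀ i : {x // x ∈ t}, Continuous (fun p : TotalSpace F E =>
        c i p.1 • (trivializationAt F E i.1).continuousLinearMapAt ℂ p.1 p.2) := by
      intro i
      rw [continuous_iff_continuousAt]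
      intro p
      by_cases hp : p.1 ∈ (trivializationAt F E i.1).baseSet
      · have hs : (trivializationAt F E i.1).source ∈ 𝓝 p :=
          (trivializationAt F E i.1).open_source.mem_nhds
            ((trivializationAt F E i.1).mem_source.2 hp)
        have hcont : ContinuousAt
            (fun q : TotalSpace F E => c i q.1 • ((trivializationAt F E i.1) q).2) p := by
          refine ContinuousAt.smul ?_ ?_
          · exact ((hc_cont i).comp (FiberBundle.continuous_proj F E)).continuousAt
          · exact continuous_snd.continuousAt.comp
              ((trivializationAt F E i.1).continuousOn.continuousAt hs)
        refine hcont.congr_of_eventuallyEq ?_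
        filter_upwards [hs] with q hq
        have hq' : q.1 ∈ (trivializationAt F E i.1).baseSet :=
          (trivializationAt F E i.1).mem_source.1 hq
        rw [Trivialization.continuousLinearMapAt_apply,
          (trivializationAt F E i.1).coe_linearMapAt_of_mem hq']
      · have hK : p.1 ∉ tsupport ⇑(ρ i) := fun h => hp (hρ i h)
        have hs : (TotalSpace.proj ⁻¹' (tsupport ⇑(ρ i))ᶜ : Set (TotalSpace F E)) ∈ 𝓝 p :=
          (((isClosed_tsupport _).isOpen_compl).preimage
            (FiberBundle.continuous_proj F E)).mem_nhds hK
        refine ContinuousAt.congr_of_eventuallyEq (continuousAt_const (y := (0 : F))) ?_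
        filter_upwards [hs] with q hq
        rw [hc_zero i q.1 hq, zero_smul]
    have hφc : Continuous (fun p : TotalSpace F E => (φ₀ p.1 p.2 : {x // x ∈ t} → F)) := by
      refine continuous_pi fun i => ?_
      simpa only [hφ₀, ContinuousLinearMap.pi_apply,
        ContinuousLinearMap.smul_apply] using key i
    have hfin : Continuous fun p : TotalSpace F E => (p.1, A (φ₀ p.1 p.2)) :=
      (FiberBundle.continuous_proj F E).prodMk (A.continuous.comp hφc)
    simpa only [ContinuousLinearMap.comp_apply, ContinuousLinearEquiv.coe_coe] using hfin
  · -- continuity of ψ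
    have hg : Continuous (fun q : B × ({x // x ∈ t} → F) =>
        (TotalSpace.mk q.1 (ψ₀ q.1 q.2) : TotalSpace F E)) := by
      rw [continuous_iff_continuousAt]
      intro q₀
      obtain ⟨j, hj⟩ := Set.mem_iUnion.1 (hcov (Set.mem_univ q₀.1))
      have hbase : (Prod.fst ⁻¹' (trivializationAt F E j.1).baseSet :
          Set (B × ({x // x ∈ t} → F))) ∈ 𝓝 q₀ :=
        ((trivializationAt F E j.1).open_baseSet.preimage continuous_fst).mem_nhds hj
      have hpre : (fun q : B × ({x // x ∈ t} → F) =>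
          (TotalSpace.mk q.1 (ψ₀ q.1 q.2) : TotalSpace F E)) ⁻¹'
          (trivializationAt F E j.1).source ∈ 𝓝 q₀ := by
        have hset : (fun q : B × ({x // x ∈ t} → F) =>
            (TotalSpace.mk q.1 (ψ₀ q.1 q.2) : TotalSpace F E)) ⁻¹'
            (trivializationAt F E j.1).source
            = Prod.fst ⁻¹' (trivializationAt F E j.1).baseSet := by
          ext q; simp [Trivialization.mem_source]
        rw [hset]; exact hbase
      rw [(trivializationAt F E j.1).toOpenPartialHomeomorph.continuousAt_iff_continuousAt_comp_left
        hpre]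
      have hterm : ∀ i : {x // x ∈ t}, ContinuousAt (fun q : B × ({x // x ∈ t} → F) =>
          c i q.1 • (trivializationAt F E j.1).continuousLinearMapAt ℂ q.1
            ((trivializationAt F E i.1).symmL ℂ q.1 (q.2 i))) q₀ := by
        intro i
        by_cases hi : q₀.1 ∈ (trivializationAt F E i.1).baseSet
        · have hopen : IsOpen (Prod.fst ⁻¹' ((trivializationAt F E i.1).baseSet ∩
              (trivializationAt F E j.1).baseSet) : Set (B × ({x // x ∈ t} → F))) :=
            ((trivializationAt F E i.1).open_baseSet.inter
              (trivializationAt F E j.1).open_baseSet).preimage continuous_fst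
          have hmem : q₀ ∈ (Prod.fst ⁻¹' ((trivializationAt F E i.1).baseSet ∩
              (trivializationAt F E j.1).baseSet) : Set (B × ({x // x ∈ t} → F))) := ⟨hi, hj⟩
          have hcc : ContinuousOn (fun q : B × ({x // x ∈ t} → F) =>
              c i q.1 • ((trivializationAt F E i.1).coordChangeL ℂ
                (trivializationAt F E j.1) q.1 : F →L[ℂ] F) (q.2 i))
              (Prod.fst ⁻¹' ((trivializationAt F E i.1).baseSet ∩
                (trivializationAt F E j.1).baseSet)) := by
          -- smul of scalar and clm application
            refine ContinuousOn.smul ((hc_cont i).comp continuous_fst).continuousOn ?_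
            refine ContinuousOn.clm_apply ?_
              ((continuous_apply i).comp continuous_snd).continuousOn
            exact (continuousOn_coordChange ℂ (trivializationAt F E i.1)
              (trivializationAt F E j.1)).comp continuous_fst.continuousOn (fun q hq => hq)
          refine (hcc.continuousAt (hopen.mem_nhds hmem)).congr_of_eventuallyEq ?_
          filter_upwards [hopen.mem_nhds hmem] with q hq
          rw [ContinuousLinearEquiv.coe_coe, Trivialization.coordChangeL_apply _ _ hq, Trivialization.symmL_apply (hb := hq.1),
            Trivialization.continuousLinearMapAt_apply,
            (trivializationAt F E j.1).coe_linearMapAt_of_mem hq.2]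
        · have hK : q₀.1 ∉ tsupport ⇑(ρ i) := fun h => hi (hρ i h)
          have hs : (Prod.fst ⁻¹' (tsupport ⇑(ρ i))ᶜ :
              Set (B × ({x // x ∈ t} → F))) ∈ 𝓝 q₀ :=
            (((isClosed_tsupport _).isOpen_compl).preimage continuous_fst).mem_nhds hK
          refine ContinuousAt.congr_of_eventuallyEq (continuousAt_const (y := (0 : F))) ?_
          filter_upwards [hs] with q hq
          rw [hc_zero i q.1 hq, zero_smul]
      have hsum : ContinuousAt (fun q : B × ({x // x ∈ t} → F) =>
          (q.1, ∑ i, c i q.1 • (trivializationAt F E j.1).continuousLinearMapAt ℂ q.1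
            ((trivializationAt F E i.1).symmL ℂ q.1 (q.2 i)))) q₀ :=
        continuous_fst.continuousAt.prodMk (tendsto_finset_sum _ fun i _ => hterm i)
      refine hsum.congr_of_eventuallyEq ?_
      filter_upwards [hbase] with q hq
      show (trivializationAt F E j.1) (TotalSpace.mk q.1 (ψ₀ q.1 q.2)) = _
      have hproj : (TotalSpace.mk q.1 (ψ₀ q.1 q.2) : TotalSpace F E).proj
          ∈ (trivializationAt F E j.1).baseSet := hq
      rw [← Trivialization.mk_proj_snd' _ hproj]
      refine Prod.ext rfl ?_
      have hz : ∀ z : E q.1, ((trivializationAt F E j.1) (TotalSpace.mk q.1 z)).2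
          = (trivializationAt F E j.1).continuousLinearMapAt ℂ q.1 z := by
        intro z
        rw [Trivialization.continuousLinearMapAt_apply,
          (trivializationAt F E j.1).coe_linearMapAt_of_mem hq]
      rw [hz]
      rw [hψ₀]
      simp only [ContinuousLinearMap.sum_apply, ContinuousLinearMap.smul_apply,
        ContinuousLinearMap.comp_apply, ContinuousLinearMap.proj_apply, map_sum, map_smul]
    have hcomp := hg.comp ((continuous_fst.prodMk
      (A.symm.continuous.comp continuous_snd)) :
      Continuous fun q : B × (Fin k → ℂ) => (q.1, A.symm q.2))
    simpa only [Function.comp_def, ContinuousLinearMap.comp_apply,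
      ContinuousLinearEquiv.coe_coe] using hcomp
  · intro x v
    simp only [ContinuousLinearMap.comp_apply, ContinuousLinearEquiv.coe_coe,
      ContinuousLinearEquiv.symm_apply_apply]
    exact hinv x v
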